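/- Let π ∈ S_n and let G_π be its permutation graph. Suppose u < v, u and v are adjacent in G_π, and {u,v} is a dominating set of G_π. Then every private neighbor of u (other than u itself) is greater than u, and every private neighbor of v (other than v itself) is less than v. -/

import Mathlib

/-- The permutation graph of `π`: vertices `0,…,n-1` (0-indexed version of `1,…,n`),
with `i < j` adjacent iff `π⁻¹ i > π⁻¹ j`. -/
def permGraph {n : ℕ} (π : Equiv.Perm (Fin n)) : SimpleGraph (Fin n) where
  Adj i j := (i < j ∧ π.symm j < π.symm i) ∨ (j < i ∧ π.symm i < π.symm j)
  symm := ⟨by intro i j h; tauto⟩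
  loopless := ⟨by intro i h; rcases h with ⟨h, _⟩ | ⟨h, _⟩ <;> exact lt_irrefl i h⟩

/-- `D` dominates `G`: every vertex is in `D` or adjacent to an element of `D`. -/
def Dominates {V : Type*} (G : SimpleGraph V) (D : Set V) : Prop :=
  ∀ v, v ∈ D ∨ ∃ d ∈ D, G.Adj v d

/-- The domination number: minimum cardinality of a dominating set. -/
noncomputable def domNumber {V : Type*} [Fintype V] (G : SimpleGraph V) : ℕ :=
  sInf {k | ∃ D : Finset V, D.card = k ∧ Dominates G ↑D}

/-- Closed neighborhood `N[x]`. -/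
def closedNbhd {V : Type*} (G : SimpleGraph V) (x : V) : Set V :=
  {y | y = x ∨ G.Adj x y}

/-- Degree of a vertex. -/
noncomputable def deg {V : Type*} (G : SimpleGraph V) (v : V) : ℕ :=
  (G.neighborSet v).ncard

theorem dom_pair_adjacent_neighbors {n : ℕ} (π : Equiv.Perm (Fin n)) (u v : Fin n)
    (huv : u < v) (hadj : (permGraph π).Adj u v)
    (hdom : Dominates (permGraph π) {u, v}) :
    (∀ x, x ≠ u → closedNbhd (permGraph π) x ∩ {u, v} = {u} → u < x) ∧
    (∀ x, x ≠ v → closedNbhd (permGraph π) x ∩ {u, v} = {v} → x < v) := by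

  have hsym : π.symm v < π.symm u := by
    rcases hadj with ⟨_, h⟩ | ⟨h, _⟩
    · exact h
    · exact absurd huv (not_lt.2 h.le)
  constructor
  · intro x hxu hpriv
    by_contra hle
    push_neg at hle
    have hxu' : x < u := lt_of_le_of_ne hle hxu
    have hu : u ∈ closedNbhd (permGraph π) x ∩ {u, v} := by
      rw [hpriv]; rfl
    have hadjxu : (permGraph π).Adj x u := by
      rcases hu.1 with h | h
      · exact absurd h.symm hxu
      · exact h
    have hsxu : π.symm u < π.symm x := by
      rcases hadjxu with ⟨_, h⟩ | ⟨h, _⟩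
      · exact h
      · exact absurd hxu' (not_lt.2 h.le)
    have hv : v ∈ closedNbhd (permGraph π) x ∩ {u, v} := by
      refine ⟨Or.inr (Or.inl ⟨hxu'.trans huv, hsym.trans hsxu⟩), Or.inr rfl⟩
    rw [hpriv] at hv
    exact absurd (Set.mem_singleton_iff.1 hv) (ne_of_gt huv)
  · intro x hxv hpriv
    by_contra hle
    push_neg at hle
    have hxv' : v < x := lt_of_le_of_ne hle (Ne.symm hxv)
    have hv : v ∈ closedNbhd (permGraph π) x ∩ {u, v} := by
      rw [hpriv]; rfl
    have hadjxv : (permGraph π).Adj x v := by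
      rcases hv.1 with h | h
      · exact absurd h.symm hxv
      · exact h
    have hsxv : π.symm x < π.symm v := by
      rcases hadjxv with ⟨h, _⟩ | ⟨_, h⟩
      · exact absurd hxv' (not_lt.2 h.le)
      · exact h
    have hu : u ∈ closedNbhd (permGraph π) x ∩ {u, v} := by
      refine ⟨Or.inr (Or.inr ⟨huv.trans hxv', hsxv.trans hsym⟩), Or.inl rfl⟩
    rw [hpriv] at hu
    exact absurd (Set.mem_singleton_iff.1 hu) (ne_of_lt huv)
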